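/- Let L be a finite lattice, let I and J be intervals of L with I congruence-perspective up to J, and let b be a prime interval contained in J. Then there exists a prime interval a contained in I such that a is prime-projective to b. -/

import Mathlib

universe u

/-- A congruence of a lattice: an equivalence relation compatible with `⊔` and `⊓`. -/
structure LatCon (L : Type u) [Lattice L] : Type u where
  rel : L → L → Prop
  refl : ∀ a, rel a a
  symm : ∀ {a b}, rel a b → rel b a
  trans : ∀ {a b c}, rel a b → rel b c → rel a c
  sup_comp : ∀ {a b c d}, rel a b → rel c d → rel (a ⊔ c) (b ⊔ d)
  inf_comp : ∀ {a b c d}, rel a b → rel c d → rel (a ⊓ c) (b ⊓ d)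

variable {L : Type u} [Lattice L]

/-- The inclusion order on congruences. -/
def LatCon.le (α β : LatCon L) : Prop := ∀ a b : L, α.rel a b → β.rel a b

/-- The principal congruence `con(x, y)`: the smallest congruence collapsing `x` and `y`. -/
def conOf (x y : L) : LatCon L where
  rel a b := ∀ θ : LatCon L, θ.rel x y → θ.rel a b
  refl a := fun θ _ => θ.refl a
  symm h := fun θ hθ => θ.symm (h θ hθ)
  trans h₁ h₂ := fun θ hθ => θ.trans (h₁ θ hθ) (h₂ θ hθ)
  sup_comp h₁ h₂ := fun θ hθ => θ.sup_comp (h₁ θ hθ) (h₂ θ hθ)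
  inf_comp h₁ h₂ := fun θ hθ => θ.inf_comp (h₁ θ hθ) (h₂ θ hθ)

/-- The bottom congruence: equality. -/
def conBot : LatCon L where
  rel a b := a = b
  refl _ := rfl
  symm h := h.symm
  trans h₁ h₂ := h₁.trans h₂
  sup_comp h₁ h₂ := by rw [h₁, h₂]
  inf_comp h₁ h₂ := by rw [h₁, h₂]

/-- The join of two congruences: the smallest congruence containing both. -/
def conJoin (α β : LatCon L) : LatCon L where
  rel a b := ∀ θ : LatCon L, α.le θ → β.le θ → θ.rel a b
  refl a := fun θ _ _ => θ.refl a
  symm h := fun θ hα hβ => θ.symm (h θ hα hβ)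
  trans h₁ h₂ := fun θ hα hβ => θ.trans (h₁ θ hα hβ) (h₂ θ hα hβ)
  sup_comp h₁ h₂ := fun θ hα hβ => θ.sup_comp (h₁ θ hα hβ) (h₂ θ hα hβ)
  inf_comp h₁ h₂ := fun θ hα hβ => θ.inf_comp (h₁ θ hα hβ) (h₂ θ hα hβ)

/-- A congruence is join-irreducible if it is not the bottom congruence and is not
the join of two congruences unless it equals one of them. -/
def LatCon.JoinIrreducible (θ : LatCon L) : Prop :=
  θ ≠ conBot ∧ ∀ α β : LatCon L, θ = conJoin α β → θ = α ∨ θ = β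

/-- `p` is a prime interval: its bottom is covered by its top. -/
def IsPrimeInt (p : L × L) : Prop := p.1 ⋖ p.2

/-- `[a, b]` is perspective up to `[c, d]`: `b ⊔ c = d` and `a = b ⊓ c`. -/
def PerspUp (p q : L × L) : Prop := p.2 ⊔ q.1 = q.2 ∧ p.1 = p.2 ⊓ q.1

/-- `[a, b]` is perspective down to `[c, d]`: `a ⊓ d = c` and `a ⊔ d = b`. -/
def PerspDn (p q : L × L) : Prop := p.1 ⊓ q.2 = q.1 ∧ p.1 ⊔ q.2 = p.2

/-- Perspectivity: up or down. -/
def Persp (p q : L × L) : Prop := PerspUp p q ∨ PerspDn p q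

/-- `p` is prime-perspective down to `q`: `1_q ≤ 1_p`, `p` is perspective down onto the
interval `[0_p ⊓ 1_q, 1_q]` (i.e. `0_p ⊔ 1_q = 1_p`), and `q ⊆ [0_p ⊓ 1_q, 1_q]`
(i.e. `0_p ⊓ 1_q ≤ 0_q`). -/
def PPerspDn (p q : L × L) : Prop := q.2 ≤ p.2 ∧ p.1 ⊔ q.2 = p.2 ∧ p.1 ⊓ q.2 ≤ q.1

/-- `p` is prime-perspective up to `q`: the dual of `PPerspDn`. -/
def PPerspUp (p q : L × L) : Prop := p.1 ≤ q.1 ∧ p.2 ⊓ q.1 = p.1 ∧ q.2 ≤ p.2 ⊔ q.1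

/-- Prime-perspectivity: up or down. -/
def PPersp (p q : L × L) : Prop := PPerspUp p q ∨ PPerspDn p q

/-- Prime-projectivity: the reflexive-transitive extension of prime-perspectivity. -/
def PProj : (L × L) → (L × L) → Prop := Relation.ReflTransGen PPersp

/-- `q` is collapsed by `con(p)`. -/
def Collapses (p q : L × L) : Prop := (conOf p.1 p.2).rel q.1 q.2

/-- `I` is congruence-perspective up to `J`: `0_J ⊔ 1_I = 1_J` and `0_I ≤ 0_J`. -/
def CPerspUp (I J : L × L) : Prop := J.1 ⊔ I.2 = J.2 ∧ I.1 ≤ J.1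

/-- `I` is congruence-perspective down to `J`: `1_J ⊓ 0_I = 0_J` and `1_J ≤ 1_I`. -/
def CPerspDn (I J : L × L) : Prop := J.2 ⊓ I.1 = J.1 ∧ J.2 ≤ I.2

/-- Congruence-perspectivity: up or down. -/
def CPersp (I J : L × L) : Prop := CPerspUp I J ∨ CPerspDn I J

/-- Congruence-projectivity: the reflexive-transitive extension of congruence-perspectivity. -/
def CProj : (L × L) → (L × L) → Prop := Relation.ReflTransGen CPersp

theorem cperspUp_exists_pproj [Fintype L] (I J : L × L) (hI : I.1 ≤ I.2)
    (hIJ : CPerspUp I J) (b : L × L) (hb : IsPrimeInt b) (hb1 : J.1 ≤ b.1) (hb2 : b.2 ≤ J.2) :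
    ∃ a : L × L, IsPrimeInt a ∧ I.1 ≤ a.1 ∧ a.2 ≤ I.2 ∧ PProj a b := by
  obtain ⟨hJ, hIJ1⟩ := hIJ
  obtain ⟨x, y⟩ := b
  simp only [IsPrimeInt] at hb hb1 hb2 ⊢
  have hxy : x ⋖ y := hb
  set u := x ⊓ I.2 with hu
  have hyI2 : y ≤ x ⊔ I.2 := by
    calc y ≤ J.2 := hb2
    _ = J.1 ⊔ I.2 := hJ.symm
    _ ≤ x ⊔ I.2 := sup_le_sup_right hb1 _
  obtain ⟨v, ⟨huv, hvI, hyv⟩, hvmin⟩ :=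
    Set.Finite.exists_minimalFor id {v : L | u ≤ v ∧ v ≤ I.2 ∧ y ≤ x ⊔ v}
      (Set.toFinite _) ⟨I.2, inf_le_right, le_refl _, hyI2⟩
  have huvlt : u < v := by
    rcases lt_or_eq_of_le huv with h | h
    · exact h
    · exfalso
      rw [← h, sup_eq_left.mpr inf_le_left] at hyv
      exact hxy.lt.not_ge hyv
  obtain ⟨w, ⟨huw, hwv⟩, hwmax⟩ :=
    Set.Finite.exists_maximalFor id {w : L | u ≤ w ∧ w < v}
      (Set.toFinite _) ⟨u, le_refl u, huvlt⟩
  have hcov : w ⋖ v := by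
    refine ⟨hwv, fun z hwz hzv => ?_⟩
    exact hwz.not_ge (hwmax ⟨huw.trans hwz.le, hzv⟩ hwz.le)
  have hyw : ¬ y ≤ x ⊔ w := by
    intro h
    exact hwv.not_ge (hvmin ⟨huw, hwv.le.trans hvI, h⟩ hwv.le)
  have hvxw : v ⊓ (x ⊔ w) = w := by
    rcases hcov.eq_or_eq (c := v ⊓ (x ⊔ w)) (le_inf hcov.le le_sup_right) inf_le_left with h | h
    · exact h
    · exact absurd (hyv.trans (sup_le le_sup_left (h ▸ inf_le_right))) hyw
  have hxwy : (x ⊔ w) ⊓ y = x := by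
    rcases hxy.eq_or_eq (c := (x ⊔ w) ⊓ y) (le_inf le_sup_left hxy.le) inf_le_right with h | h
    · exact h
    · exact absurd (h ▸ inf_le_left) hyw
  refine ⟨(w, v), hcov, le_trans (le_inf (hIJ1.trans hb1) hI) huw, hvI, ?_⟩
  have step1 : PPersp ((w, v) : L × L) (x ⊔ w, x ⊔ w ⊔ y) := by
    left
    refine ⟨le_sup_right, hvxw, ?_⟩
    exact sup_le le_sup_right (hyv.trans (sup_le (le_sup_left.trans le_sup_right) le_sup_left))
  have step2 : PPersp ((x ⊔ w, x ⊔ w ⊔ y) : L × L) (x, y) := by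
    right
    exact ⟨le_sup_right, rfl, le_of_eq hxwy⟩
  exact Relation.ReflTransGen.head step1 (Relation.ReflTransGen.single step2)
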